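/- For any real polynomial p(t) = ∑_{κ=1}^k a_κ t^κ with zero constant term, every coefficient satisfies |a_κ| ≤ (1+√2)^k · sup_{|t| ≤ 1} |p(t)|. -/

import Mathlib

open Polynomial Real

/-- Chebyshev polynomials (first kind). -/
noncomputable def Tc : ℕ → Polynomial ℝ
  | 0 => 1
  | 1 => Polynomial.X
  | (n+2) => 2 * Polynomial.X * Tc (n+1) - Tc n

/-- Absolute-value Chebyshev polynomials. -/
noncomputable def Sc : ℕ → Polynomial ℝ
  | 0 => 1
  | 1 => Polynomial.X
  | (n+2) => 2 * Polynomial.X * Sc (n+1) + Sc n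

lemma Tc_eval_cos (n : ℕ) (θ : ℝ) : (Tc n).eval (Real.cos θ) = Real.cos (n * θ) := by
  induction n using Nat.twoStepInduction with
  | zero => simp [Tc]
  | one => simp [Tc]
  | more n ih1 ih2 =>
    have key : Real.cos ((n+2) * θ) = 2 * Real.cos θ * Real.cos ((n+1) * θ) - Real.cos (n * θ) := by
      have h1 : ((n:ℝ)+2) * θ = (n+1) * θ + θ := by ring
      have h2 : ((n:ℝ)) * θ = (n+1) * θ - θ := by ring
      rw [h1, h2, Real.cos_add, Real.cos_sub]; ring
    simp only [Tc, Polynomial.eval_sub, Polynomial.eval_mul, Polynomial.eval_ofNat,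
      Polynomial.eval_X, ih1, ih2]
    push_cast
    push_cast at key
    exact key.symm

lemma coeff_two_X_mul (q : Polynomial ℝ) (m : ℕ) :
    (2 * Polynomial.X * q).coeff (m+1) = 2 * q.coeff m := by
  rw [mul_assoc]; simp [Polynomial.coeff_X_mul]

lemma coeff_two_X_mul_zero (q : Polynomial ℝ) : (2 * Polynomial.X * q).coeff 0 = 0 := by
  rw [mul_assoc]; simp

lemma Sc_coeff_nonneg (n : ℕ) : ∀ m, 0 ≤ (Sc n).coeff m := by
  induction n using Nat.twoStepInduction with
  | zero => intro m; simp [Sc, Polynomial.coeff_one]; split <;> norm_num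
  | one => intro m; simp [Sc, Polynomial.coeff_X]; split <;> norm_num
  | more n ih1 ih2 =>
    intro m
    match m with
    | 0 => simp only [Sc, Polynomial.coeff_add, coeff_two_X_mul_zero, zero_add]; exact ih1 0
    | m+1 =>
      simp only [Sc, Polynomial.coeff_add, coeff_two_X_mul]
      have h1 := ih1 (m+1); have h2 := ih2 m; linarith

lemma Tc_coeff_abs_le (n : ℕ) : ∀ m, |(Tc n).coeff m| ≤ (Sc n).coeff m := by
  induction n using Nat.twoStepInduction with
  | zero => intro m; simp [Tc, Sc, Polynomial.coeff_one]; split <;> norm_num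
  | one => intro m; simp [Tc, Sc, Polynomial.coeff_X]; split <;> norm_num
  | more n ih1 ih2 =>
    intro m
    match m with
    | 0 =>
      simp only [Tc, Sc, Polynomial.coeff_add, Polynomial.coeff_sub, coeff_two_X_mul_zero,
        zero_add, zero_sub, abs_neg]
      exact ih1 0
    | m+1 =>
      simp only [Tc, Sc, Polynomial.coeff_add, Polynomial.coeff_sub, coeff_two_X_mul]
      calc |2 * (Tc (n+1)).coeff m - (Tc n).coeff (m+1)|
          ≤ 2 * |(Tc (n+1)).coeff m| + |(Tc n).coeff (m+1)| := by
            have := abs_sub (2 * (Tc (n+1)).coeff m) ((Tc n).coeff (m+1))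
            rw [abs_mul] at this
            simp only [abs_two] at this
            linarith
        _ ≤ 2 * (Sc (n+1)).coeff m + (Sc n).coeff (m+1) := by
            have h1 := ih2 m; have h2 := ih1 (m+1); linarith

lemma R_coeff_le (n : ℕ) : ∀ m, (Sc (n+1)).coeff m + (Sc n).coeff m ≤ (1 + Real.sqrt 2) ^ n := by
  have h2 : (1:ℝ) ≤ Real.sqrt 2 := by
    rw [show (1:ℝ) = Real.sqrt 1 by simp]
    exact Real.sqrt_le_sqrt (by norm_num)
  induction n using Nat.twoStepInduction with
  | zero =>
    intro m
    simp only [Sc, pow_zero]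
    rcases m with _ | _ | m <;>
      simp [Polynomial.coeff_X, Polynomial.coeff_one]
  | one =>
    intro m
    have : Sc 2 = 2 * Polynomial.X * Sc 1 + Sc 0 := rfl
    rw [this]
    rcases m with _ | _ | _ | m <;>
      simp [Sc, coeff_two_X_mul_zero, Polynomial.coeff_one, Polynomial.coeff_X,
        coeff_two_X_mul] <;> linarith
  | more n ih1 ih2 =>
    intro m
    have e3 : Sc (n+3) = 2 * Polynomial.X * Sc (n+2) + Sc (n+1) := rfl
    have e2 : Sc (n+2) = 2 * Polynomial.X * Sc (n+1) + Sc n := rfl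
    have key : (1 + Real.sqrt 2)^(n+2) = 2 * (1 + Real.sqrt 2)^(n+1) + (1 + Real.sqrt 2)^n := by
      have : (1 + Real.sqrt 2)^2 = 2 * (1 + Real.sqrt 2) + 1 := by
        have : Real.sqrt 2 ^ 2 = 2 := Real.sq_sqrt (by norm_num)
        nlinarith [this]
      calc (1 + Real.sqrt 2)^(n+2) = (1 + Real.sqrt 2)^n * (1 + Real.sqrt 2)^2 := by ring
        _ = (1 + Real.sqrt 2)^n * (2 * (1 + Real.sqrt 2) + 1) := by rw [this]
        _ = 2 * ((1 + Real.sqrt 2)^n * (1 + Real.sqrt 2)) + (1 + Real.sqrt 2)^n := by ring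
        _ = 2 * (1 + Real.sqrt 2)^(n+1) + (1 + Real.sqrt 2)^n := by ring
    have comb : Sc (n+3) + Sc (n+2) = 2 * Polynomial.X * (Sc (n+2) + Sc (n+1)) + (Sc (n+1) + Sc n) := by
      rw [e3, e2]; ring
    rw [key, ← Polynomial.coeff_add, comb]
    match m with
    | 0 =>
      simp only [Polynomial.coeff_add, coeff_two_X_mul_zero, zero_add]
      have h1 := ih1 0
      have hp : (0:ℝ) ≤ (1 + Real.sqrt 2)^(n+1) := by positivity
      linarith
    | m+1 =>
      simp only [Polynomial.coeff_add, coeff_two_X_mul]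
      have h1 := ih1 (m+1)
      have h2' := ih2 m
      linarith

lemma Sc_telescope (k : ℕ) :
    2 * Polynomial.X * (∑ j ∈ Finset.range k, Sc (j+1)) =
      Sc (k+1) + Sc k - Sc 1 - Sc 0 := by
  induction k with
  | zero => simp [Sc]
  | succ k ih =>
    rw [Finset.sum_range_succ, mul_add, ih]
    have e2 : Sc (k+2) = 2 * Polynomial.X * Sc (k+1) + Sc k := rfl
    rw [e2]; ring

lemma sum_Sc_coeff_le (k κ : ℕ) (hκ : 1 ≤ κ) :
    2 * ∑ j ∈ Finset.range k, (Sc (j+1)).coeff κ ≤ (1 + Real.sqrt 2) ^ k := by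
  have tel := congrArg (fun q => Polynomial.coeff q (κ+1)) (Sc_telescope k)
  simp only [Polynomial.coeff_sub, Polynomial.coeff_add, coeff_two_X_mul,
    Polynomial.finset_sum_coeff] at tel
  have hX : (Sc 1).coeff (κ+1) = 0 := by
    show Polynomial.X.coeff (κ+1) = 0
    rw [Polynomial.coeff_X, if_neg (by omega)]
  have h1 : (Sc 0).coeff (κ+1) = 0 := by
    show (1 : Polynomial ℝ).coeff (κ+1) = 0
    rw [Polynomial.coeff_one, if_neg (by omega)]
  rw [hX, h1] at tel
  have := R_coeff_le k (κ+1)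
  rw [Finset.mul_sum] at tel
  rw [Finset.mul_sum]
  linarith

lemma Tc_natDegree_le (n : ℕ) : (Tc n).natDegree ≤ n := by
  induction n using Nat.twoStepInduction with
  | zero => simp [Tc]
  | one => simp [Tc]
  | more n ih1 ih2 =>
    show (2 * Polynomial.X * Tc (n+1) - Tc n).natDegree ≤ n + 2
    refine le_trans (Polynomial.natDegree_sub_le _ _) ?_
    refine max_le ?_ (by omega)
    refine le_trans (Polynomial.natDegree_mul_le) ?_
    have : (2 * Polynomial.X : Polynomial ℝ).natDegree ≤ 1 := by
      refine le_trans (Polynomial.natDegree_mul_le) ?_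
      simp
    omega

lemma Tc_coeff_eq_zero (n m : ℕ) (h : n < m) : (Tc n).coeff m = 0 :=
  Polynomial.coeff_eq_zero_of_natDegree_lt (lt_of_le_of_lt (Tc_natDegree_le n) h)

lemma Tc_coeff_self (n : ℕ) : (Tc (n+1)).coeff (n+1) = 2 ^ n := by
  induction n with
  | zero => simp [Tc]
  | succ n ih =>
    have ed : Tc (n+2) = 2 * Polynomial.X * Tc (n+1) - Tc n := rfl
    rw [show n+1+1 = n+2 from rfl, ed, Polynomial.coeff_sub, coeff_two_X_mul, ih,
      Tc_coeff_eq_zero n (n+2) (by omega)]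
    ring

lemma Tc_span (k : ℕ) : ∀ p : Polynomial ℝ, p.natDegree ≤ k →
    ∃ c : ℕ → ℝ, p = ∑ j ∈ Finset.range (k+1), Polynomial.C (c j) * Tc j := by
  induction k with
  | zero =>
    intro p hp
    refine ⟨fun _ => p.coeff 0, ?_⟩
    rw [Polynomial.eq_C_of_natDegree_le_zero hp]
    simp [Tc]
  | succ k ih =>
    intro p hp
    set q := p - Polynomial.C (p.coeff (k+1) / 2^k) * Tc (k+1) with hqdef
    have hq : q.natDegree ≤ k := by
      rw [Polynomial.natDegree_le_iff_coeff_eq_zero]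
      intro m hm
      rw [hqdef, Polynomial.coeff_sub, Polynomial.coeff_C_mul]
      rcases eq_or_lt_of_le (Nat.succ_le_of_lt hm) with h | h
      · rw [← h, Tc_coeff_self]
        field_simp
        simp
      · rw [Polynomial.coeff_eq_zero_of_natDegree_lt (lt_of_le_of_lt hp h),
          Tc_coeff_eq_zero _ _ h]
        ring
    obtain ⟨c, hc⟩ := ih q hq
    refine ⟨fun j => if j = k+1 then p.coeff (k+1) / 2^k else c j, ?_⟩
    rw [Finset.sum_range_succ]
    simp only [if_pos rfl]
    have : ∑ j ∈ Finset.range (k+1),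
        Polynomial.C (if j = k+1 then p.coeff (k+1) / 2^k else c j) * Tc j
        = ∑ j ∈ Finset.range (k+1), Polynomial.C (c j) * Tc j := by
      refine Finset.sum_congr rfl fun j hj => ?_
      rw [if_neg (by simp at hj; omega)]
    rw [this, ← hc, hqdef]
    norm_num

lemma int_cos_mul (c : ℝ) (hc : c ≠ 0) :
    ∫ x in (0:ℝ)..π, Real.cos (c * x) = Real.sin (c * π) / c := by
  have h : ∀ x ∈ Set.uIcc (0:ℝ) π, HasDerivAt (fun y => Real.sin (c * y) / c)
      (Real.cos (c * x)) x := by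
    intro x _
    have h1 : HasDerivAt (fun y : ℝ => c * y) c x := by
      simpa using (hasDerivAt_id x).const_mul c
    have h2 := (Real.hasDerivAt_sin (c * x)).comp x h1
    have h3 := h2.div_const c
    refine h3.congr_deriv ?_
    field_simp
  have hint : IntervalIntegrable (fun x => Real.cos (c * x)) MeasureTheory.volume 0 π :=
    (Real.continuous_cos.comp (continuous_const.mul continuous_id)).intervalIntegrable _ _
  have := intervalIntegral.integral_eq_sub_of_hasDerivAt h hint
  rw [this]
  simp

lemma cos_orth (i j : ℕ) (hi : 1 ≤ i) :
    ∫ x in (0:ℝ)..π, Real.cos (j * x) * Real.cos (i * x) =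
      if j = i then π / 2 else 0 := by
  have hrw : ∀ x : ℝ, Real.cos (j * x) * Real.cos (i * x) =
      (Real.cos (((j:ℝ) + i) * x) + Real.cos (((j:ℝ) - i) * x)) / 2 := by
    intro x
    rw [add_mul, sub_mul, Real.cos_add, Real.cos_sub]
    ring
  have hci : ∀ d : ℝ, Continuous fun x : ℝ => Real.cos (d * x) := fun d =>
    Real.continuous_cos.comp (continuous_const.mul continuous_id)
  rw [intervalIntegral.integral_congr (g := fun x =>
      (Real.cos (((j:ℝ) + i) * x) + Real.cos (((j:ℝ) - i) * x)) / 2)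
      (fun x _ => hrw x)]
  rw [intervalIntegral.integral_div, intervalIntegral.integral_add
      (((hci _)).intervalIntegrable _ _) (((hci _)).intervalIntegrable _ _)]
  have hsum : ((j:ℝ) + i) ≠ 0 := by
    have : (1:ℝ) ≤ (i:ℝ) := by exact_mod_cast hi
    positivity
  rw [int_cos_mul _ hsum]
  have hs1 : Real.sin (((j:ℝ) + i) * π) = 0 := by
    have : ((j:ℝ) + i) * π = (((j + i : ℕ)):ℝ) * π := by push_cast; ring
    rw [this]; exact Real.sin_nat_mul_pi _
  rw [hs1]
  by_cases h : j = i
  · subst h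
    simp only [sub_self, zero_mul, Real.cos_zero, if_pos rfl]
    rw [intervalIntegral.integral_const]
    simp
  · have hd : ((j:ℝ) - i) ≠ 0 := by
      intro hcon
      apply h
      have : (j:ℝ) = i := by linarith
      exact_mod_cast this
    rw [int_cos_mul _ hd]
    have hs2 : Real.sin (((j:ℝ) - i) * π) = 0 := by
      have : ((j:ℝ) - i) * π = (((j:ℤ) - i : ℤ):ℝ) * π := by push_cast; ring
      rw [this]; exact Real.sin_int_mul_pi _
    rw [hs2, if_neg h]
    simp

lemma c_bound (k : ℕ) (p : Polynomial ℝ) (c : ℕ → ℝ) (M : ℝ)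
    (hp : p = ∑ j ∈ Finset.range (k+1), Polynomial.C (c j) * Tc j)
    (hM : ∀ t ∈ Set.Icc (-1:ℝ) 1, |p.eval t| ≤ M)
    (i : ℕ) (hi : 1 ≤ i) (hik : i ≤ k) : |c i| ≤ 2 * M := by
  have heval : ∀ x : ℝ, p.eval (Real.cos x) =
      ∑ j ∈ Finset.range (k+1), c j * Real.cos (j * x) := by
    intro x
    rw [hp, Polynomial.eval_finset_sum]
    exact Finset.sum_congr rfl fun j _ => by
      rw [Polynomial.eval_mul, Polynomial.eval_C, Tc_eval_cos]
  have hci : ∀ d : ℝ, Continuous fun x : ℝ => Real.cos (d * x) := fun d =>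
    Real.continuous_cos.comp (continuous_const.mul continuous_id)
  have key : ∫ x in (0:ℝ)..π, p.eval (Real.cos x) * Real.cos (i * x) = c i * (π / 2) := by
    have hcongr : ∀ x : ℝ, p.eval (Real.cos x) * Real.cos (i * x) =
        ∑ j ∈ Finset.range (k+1), c j * (Real.cos (j * x) * Real.cos (i * x)) := by
      intro x
      rw [heval x, Finset.sum_mul]
      exact Finset.sum_congr rfl fun j _ => by ring
    rw [intervalIntegral.integral_congr (g := fun x =>
        ∑ j ∈ Finset.range (k+1), c j * (Real.cos (j * x) * Real.cos (i * x)))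
        (fun x _ => hcongr x)]
    rw [intervalIntegral.integral_finset_sum]
    · have : ∀ j ∈ Finset.range (k+1),
          (∫ x in (0:ℝ)..π, c j * (Real.cos (j * x) * Real.cos (i * x)))
          = c j * (if j = i then π / 2 else 0) := by
        intro j _
        rw [intervalIntegral.integral_const_mul, cos_orth i j hi]
      rw [Finset.sum_congr rfl this]
      simp only [mul_ite, mul_zero]
      rw [Finset.sum_ite_eq' (Finset.range (k+1)) i (fun j => c j * (π/2))]
      rw [if_pos (Finset.mem_range.mpr (by omega))]
    · intro j _
      exact (continuous_const.mul ((hci _).mul (hci _))).intervalIntegrable _ _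
  have habs : ‖∫ x in (0:ℝ)..π, p.eval (Real.cos x) * Real.cos (i * x)‖ ≤ M * |π - 0| := by
    apply intervalIntegral.norm_integral_le_of_norm_le_const
    intro x _
    have h1 : |p.eval (Real.cos x)| ≤ M :=
      hM _ ⟨Real.neg_one_le_cos x, Real.cos_le_one x⟩
    have h2 : |Real.cos (i * x)| ≤ 1 := Real.abs_cos_le_one _
    calc ‖p.eval (Real.cos x) * Real.cos (i * x)‖
        = |p.eval (Real.cos x)| * |Real.cos (i * x)| := abs_mul _ _
      _ ≤ M * 1 := by
          apply mul_le_mul h1 h2 (abs_nonneg _) (le_trans (abs_nonneg _) h1)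
      _ = M := mul_one M
  rw [Real.norm_eq_abs, key] at habs
  rw [abs_mul] at habs
  have hpi : |π / 2| = π / 2 := abs_of_pos (by positivity)
  rw [hpi] at habs
  have hpi2 : |π - 0| = π := by rw [sub_zero]; exact abs_of_pos Real.pi_pos
  rw [hpi2] at habs
  nlinarith [Real.pi_pos]


/-- Markov brothers' type inequality: for a real polynomial `p` of degree at most `k`
with zero constant term, every coefficient satisfies
`|p.coeff κ| ≤ (1 + √2)^k * sup_{|t| ≤ 1} |p(t)|`. -/
theorem coeff_le_sup_abs (k : ℕ) (p : Polynomial ℝ)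
    (hdeg : p.natDegree ≤ k) (h0 : p.coeff 0 = 0) :
    ∀ κ : ℕ, 1 ≤ κ → κ ≤ k →
      |p.coeff κ| ≤ (1 + Real.sqrt 2) ^ k *
        sSup ((fun t => |p.eval t|) '' Set.Icc (-1 : ℝ) 1) := by
  intro κ hκ1 hκk
  set M := sSup ((fun t => |p.eval t|) '' Set.Icc (-1 : ℝ) 1) with hMdef
  have hbdd : BddAbove ((fun t => |p.eval t|) '' Set.Icc (-1 : ℝ) 1) :=
    (isCompact_Icc.image_of_continuousOn
      ((p.continuous_aeval.abs).continuousOn)).bddAbove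
  have hM : ∀ t ∈ Set.Icc (-1:ℝ) 1, |p.eval t| ≤ M := fun t ht =>
    le_csSup hbdd ⟨t, ht, rfl⟩
  have hM0 : 0 ≤ M := le_trans (abs_nonneg _) (hM 0 (by norm_num))
  obtain ⟨c, hp⟩ := Tc_span k p hdeg
  have hcb : ∀ j, 1 ≤ j → j ≤ k → |c j| ≤ 2 * M := fun j h1 h2 =>
    c_bound k p c M hp hM j h1 h2
  have hcoeff : p.coeff κ = ∑ j ∈ Finset.range k, c (j+1) * (Tc (j+1)).coeff κ := by
    conv_lhs => rw [hp]
    rw [Polynomial.finset_sum_coeff]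
    have : ∀ j, (Polynomial.C (c j) * Tc j).coeff κ = c j * (Tc j).coeff κ := fun j =>
      Polynomial.coeff_C_mul _
    simp only [this]
    rw [Finset.sum_range_succ']
    have h00 : (Tc 0).coeff κ = 0 := by
      show (1 : Polynomial ℝ).coeff κ = 0
      rw [Polynomial.coeff_one, if_neg (by omega)]
    rw [h00, mul_zero, add_zero]
  calc |p.coeff κ| ≤ ∑ j ∈ Finset.range k, |c (j+1) * (Tc (j+1)).coeff κ| := by
        rw [hcoeff]; exact Finset.abs_sum_le_sum_abs _ _
    _ ≤ ∑ j ∈ Finset.range k, 2 * M * (Sc (j+1)).coeff κ := by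
        refine Finset.sum_le_sum fun j hj => ?_
        rw [abs_mul]
        have h1 : |c (j+1)| ≤ 2 * M := hcb (j+1) (by omega)
          (by simp at hj; omega)
        have h2 : |(Tc (j+1)).coeff κ| ≤ (Sc (j+1)).coeff κ := Tc_coeff_abs_le _ _
        exact mul_le_mul h1 h2 (abs_nonneg _) (by positivity)
    _ = M * (2 * ∑ j ∈ Finset.range k, (Sc (j+1)).coeff κ) := by
        rw [Finset.mul_sum, Finset.mul_sum]
        exact Finset.sum_congr rfl fun j _ => by ring
    _ ≤ M * (1 + Real.sqrt 2) ^ k := by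
        refine mul_le_mul_of_nonneg_left (sum_Sc_coeff_le k κ hκ1) hM0
    _ = (1 + Real.sqrt 2) ^ k * M := mul_comm _ _
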